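/- Let λ > 0, κ ≥ 0 and ε ∈ (0, 1/2), and let r : [0,∞) → (0,1) be differentiable with r'(t) = r(t)·(1 − r(t))·λ/(1 + κ·r(t)) for all t ≥ 0 and r(0) = ε. Then r is nondecreasing and r(t) ≥ 1 − ε for every t ≥ (2(1+κ)/λ)·log((1−ε)/ε). That is, the solution rises from level ε to level 1 − ε in time at most (2(1+κ)/λ)·log((1−ε)/ε). -/

import Mathlib

/-- Let `λ > 0`, `κ ≥ 0`, `ε ∈ (0, 1/2)`, and let `r : [0,∞) → (0,1)`
solve `r' = r(1 − r)λ/(1 + κ r)` with `r(0) = ε`.  Then `r` is nondecreasing and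
`r(t) ≥ 1 − ε` for every `t ≥ (2(1+κ)/λ)·log((1−ε)/ε)`: the solution rises from `ε` to
`1 − ε` in time at most `(2(1+κ)/λ)·log((1−ε)/ε)`. -/
theorem selection_ode_rise_time (lam κ ε : ℝ) (hlam : 0 < lam) (hκ : 0 ≤ κ)
    (hε : ε ∈ Set.Ioo (0 : ℝ) (1 / 2)) (r : ℝ → ℝ)
    (hmem : ∀ t : ℝ, 0 ≤ t → r t ∈ Set.Ioo (0 : ℝ) 1)
    (hderiv : ∀ t : ℝ, 0 ≤ t →
      HasDerivAt r (r t * (1 - r t) * lam / (1 + κ * r t)) t)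
    (hr0 : r 0 = ε) :
    MonotoneOn r (Set.Ici (0 : ℝ)) ∧
    ∀ t : ℝ, (2 * (1 + κ) / lam) * Real.log ((1 - ε) / ε) ≤ t → 1 - ε ≤ r t := by
  obtain ⟨hε0, hε2⟩ := hε
  have hε1 : ε < 1 := by linarith
  have hDpos : ∀ t : ℝ, 0 ≤ t → 0 < 1 + κ * r t := fun t ht => by
    have := (hmem t ht).1; nlinarith
  have hd' : ∀ t : ℝ, 0 ≤ t → 0 ≤ r t * (1 - r t) * lam / (1 + κ * r t) := by
    intro t ht
    obtain ⟨h0, h1⟩ := hmem t ht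
    have := hDpos t ht
    apply div_nonneg _ this.le
    nlinarith [mul_pos (mul_pos h0 (by linarith : (0:ℝ) < 1 - r t)) hlam]
  -- monotonicity of r
  have hmono : MonotoneOn r (Set.Ici (0 : ℝ)) := by
    apply monotoneOn_of_hasDerivWithinAt_nonneg (convex_Ici 0)
      (f' := fun t => r t * (1 - r t) * lam / (1 + κ * r t))
    · intro t ht
      exact (hderiv t ht).continuousAt.continuousWithinAt
    · intro t ht
      rw [interior_Ici] at ht
      exact (hderiv t ht.le).hasDerivWithinAt
    · intro t ht
      rw [interior_Ici] at ht
      exact hd' t ht.le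
  refine ⟨hmono, ?_⟩
  -- the auxiliary function g
  set c : ℝ := lam / (1 + κ) with hc
  have hcpos : 0 < c := div_pos hlam (by linarith)
  set g : ℝ → ℝ := fun t => Real.log (r t) - Real.log (1 - r t) - c * t with hg
  have hgderiv : ∀ t : ℝ, 0 ≤ t →
      HasDerivAt g (lam / (1 + κ * r t) - c) t := by
    intro t ht
    obtain ⟨h0, h1⟩ := hmem t ht
    have hD := hDpos t ht
    have h1' : (1 : ℝ) - r t ≠ 0 := by linarith
    have h0' : r t ≠ 0 := ne_of_gt h0
    have hD' : (1 : ℝ) + κ * r t ≠ 0 := ne_of_gt hD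
    have d1 : HasDerivAt (fun s => Real.log (r s))
        ((r t * (1 - r t) * lam / (1 + κ * r t)) / r t) t :=
      (hderiv t ht).log h0'
    have d2 : HasDerivAt (fun s => Real.log (1 - r s))
        ((0 - r t * (1 - r t) * lam / (1 + κ * r t)) / (1 - r t)) t :=
      ((hasDerivAt_const t (1 : ℝ)).sub (hderiv t ht)).log h1'
    have d3 : HasDerivAt (fun s => c * s) c t := by
      simpa using (hasDerivAt_id t).const_mul c
    have := (d1.sub d2).sub d3
    refine this.congr_deriv ?_
    rw [hc]
    have hκ1 : (1 : ℝ) + κ ≠ 0 := by positivity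
    field_simp
    ring
  have hgmono : MonotoneOn g (Set.Ici (0 : ℝ)) := by
    apply monotoneOn_of_hasDerivWithinAt_nonneg (convex_Ici 0)
      (f' := fun t => lam / (1 + κ * r t) - c)
    · intro t ht
      exact (hgderiv t ht).continuousAt.continuousWithinAt
    · intro t ht
      rw [interior_Ici] at ht
      exact (hgderiv t ht.le).hasDerivWithinAt
    · intro t ht
      rw [interior_Ici] at ht
      have h1 := (hmem t ht.le).2
      have hD := hDpos t ht.le
      have : c ≤ lam / (1 + κ * r t) := by
        rw [hc]
        apply div_le_div_of_nonneg_left hlam.le hD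
        nlinarith
      linarith
  -- conclusion
  intro t htT
  set L : ℝ := Real.log ((1 - ε) / ε) with hL
  have hLpos : 0 < L := Real.log_pos (by rw [lt_div_iff₀ hε0]; linarith)
  have hT0 : 0 ≤ 2 * (1 + κ) / lam * L := by positivity
  have ht0 : (0 : ℝ) ≤ t := le_trans hT0 htT
  have hgle : g 0 ≤ g t := hgmono (Set.mem_Ici.mpr (le_refl 0)) ht0 ht0
  have hLlog : L = Real.log (1 - ε) - Real.log ε :=
    Real.log_div (by linarith) (ne_of_gt hε0)
  have hct : 2 * L ≤ c * t := by
    have : 2 * (1 + κ) / lam * L * c = 2 * L := by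
      rw [hc]; field_simp
    nlinarith
  have hg0 : g 0 = Real.log ε - Real.log (1 - ε) := by
    simp [hg, hr0]
  have key : Real.log (1 - ε) ≤ Real.log (r t) - Real.log (1 - r t) + Real.log ε := by
    have : Real.log ε - Real.log (1 - ε) - 0 ≤
        Real.log (r t) - Real.log (1 - r t) - c * t := by
      rw [← hg0]; simpa [hg] using hgle
    have h2L : Real.log (1 - ε) - Real.log ε = L := by rw [hLlog]
    nlinarith
  by_contra hcon
  push_neg at hcon
  obtain ⟨h0, h1⟩ := hmem t ht0
  have l1 : Real.log (r t) < Real.log (1 - ε) := Real.log_lt_log h0 hcon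
  have l2 : Real.log ε < Real.log (1 - r t) := Real.log_lt_log hε0 (by linarith)
  linarith
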